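/- Fix ρ > 0 and χ > 0. The sublevel set S = {(m, U) ∈ ℝⁿ × Sym₀ⁿ : λ_max((m⊗m)/ρ − U) ≤ χ/n} is a convex and compact subset of ℝⁿ × Sym₀ⁿ. -/

import Mathlib

open Matrix Finset

noncomputable def lambdaMax {n : ℕ} (S : Matrix (Fin n) (Fin n) ℝ) : ℝ :=
  sSup {r : ℝ | ∃ v : Fin n → ℝ, (∑ i, v i ^ 2) = 1 ∧ r = v ⬝ᵥ S.mulVec v}

namespace Stmt5Aux

variable {n : ℕ}

lemma rayleigh_formula (ρ : ℝ) (m v : Fin n → ℝ) (U : Matrix (Fin n) (Fin n) ℝ) :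
    v ⬝ᵥ (ρ⁻¹ • vecMulVec m m - U).mulVec v
      = ρ⁻¹ * (∑ i, v i * m i) ^ 2 - ∑ i, ∑ j, v i * U i j * v j := by
  simp only [dotProduct, mulVec, Matrix.sub_apply, Matrix.smul_apply, vecMulVec_apply, smul_eq_mul]
  have key : ∀ x y : Fin n, v x * ((ρ⁻¹ * (m x * m y) - U x y) * v y)
      = ρ⁻¹ * ((v x * m x) * (v y * m y)) - v x * U x y * v y := fun _ _ => by ring
  simp_rw [Finset.mul_sum, key, Finset.sum_sub_distrib, ← Finset.mul_sum, ← Finset.sum_mul]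
  ring

lemma rset_bdd (A : Matrix (Fin n) (Fin n) ℝ) :
    BddAbove {r : ℝ | ∃ v : Fin n → ℝ, (∑ i, v i ^ 2) = 1 ∧ r = v ⬝ᵥ A.mulVec v} := by
  refine ⟨∑ i, ∑ j, |A i j|, ?_⟩
  rintro r ⟨v, hv, rfl⟩
  have hv1 : ∀ i, |v i| ≤ 1 := by
    intro i
    have h1 : v i ^ 2 ≤ 1 := by
      rw [← hv]
      exact Finset.single_le_sum (f := fun i => v i ^ 2) (fun _ _ => sq_nonneg _) (mem_univ i)
    nlinarith [abs_nonneg (v i), sq_abs (v i)]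
  calc v ⬝ᵥ A.mulVec v = ∑ i, ∑ j, v i * (A i j * v j) := by
        simp [dotProduct, mulVec, Finset.mul_sum]
    _ ≤ ∑ i, ∑ j, |A i j| := by
        refine Finset.sum_le_sum fun i _ => Finset.sum_le_sum fun j _ => ?_
        calc v i * (A i j * v j) ≤ |v i * (A i j * v j)| := le_abs_self _
          _ = |v i| * (|A i j| * |v j|) := by simp [abs_mul]
          _ ≤ 1 * (|A i j| * 1) := by
              gcongr
              · exact hv1 i
              · exact hv1 j
          _ = |A i j| := by ring

lemma rset_nonempty (hn : 0 < n) (A : Matrix (Fin n) (Fin n) ℝ) :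
    Set.Nonempty {r : ℝ | ∃ v : Fin n → ℝ, (∑ i, v i ^ 2) = 1 ∧ r = v ⬝ᵥ A.mulVec v} := by
  refine ⟨_, ⟨fun k => if k = ⟨0, hn⟩ then 1 else 0, ?_, rfl⟩⟩
  simp [apply_ite (fun x : ℝ => x ^ 2), Finset.sum_ite_eq']

lemma lambdaMax_le_iff (hn : 0 < n) (A : Matrix (Fin n) (Fin n) ℝ) (c : ℝ) :
    lambdaMax A ≤ c ↔ ∀ v : Fin n → ℝ, (∑ i, v i ^ 2) = 1 → v ⬝ᵥ A.mulVec v ≤ c := by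
  constructor
  · intro h v hv
    exact le_trans (le_csSup (rset_bdd A) ⟨v, hv, rfl⟩) h
  · intro h
    exact csSup_le (rset_nonempty hn A) (by rintro r ⟨v, hv, rfl⟩; exact h v hv)

/-- a test vector supported on two coordinates -/
def vv (i j : Fin n) (α β : ℝ) : Fin n → ℝ :=
  fun k => (if k = i then α else 0) + (if k = j then β else 0)

lemma vv_sum (i j : Fin n) (α β : ℝ) (f : Fin n → ℝ) :
    ∑ k, vv i j α β k * f k = α * f i + β * f j := by
  simp [vv, add_mul, ite_mul, Finset.sum_add_distrib, Finset.sum_ite_eq']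

lemma vv_quad (i j : Fin n) (α β : ℝ) (A : Matrix (Fin n) (Fin n) ℝ) :
    ∑ k, ∑ l, vv i j α β k * A k l * vv i j α β l
      = α * (α * A i i + β * A j i) + β * (α * A i j + β * A j j) := by
  calc ∑ k, ∑ l, vv i j α β k * A k l * vv i j α β l
      = ∑ k, (α * (vv i j α β k * A k i) + β * (vv i j α β k * A k j)) := by
        refine Finset.sum_congr rfl fun k _ => ?_
        simp_rw [show ∀ l, vv i j α β k * A k l * vv i j α β l
          = vv i j α β l * (vv i j α β k * A k l) from fun l => by ring]
        exact vv_sum i j α β _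
    _ = α * (α * A i i + β * A j i) + β * (α * A i j + β * A j j) := by
        rw [Finset.sum_add_distrib, ← Finset.mul_sum, ← Finset.mul_sum,
          vv_sum i j α β (fun k => A k i), vv_sum i j α β (fun k => A k j)]

lemma vv_normsq (i j : Fin n) (α β : ℝ) :
    ∑ k, vv i j α β k ^ 2 = α * vv i j α β i + β * vv i j α β j := by
  simp_rw [sq]
  exact vv_sum i j α β _

lemma vv_apply_left {i j : Fin n} (hij : i ≠ j) (α β : ℝ) : vv i j α β i = α := by
  simp [vv, hij]

lemma vv_apply_right {i j : Fin n} (hij : i ≠ j) (α β : ℝ) : vv i j α β j = β := by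
  simp [vv, Ne.symm hij]

lemma vv_apply_diag (i : Fin n) (α β : ℝ) : vv i i α β i = α + β := by
  simp [vv]

end Stmt5Aux

open Stmt5Aux

theorem stmt_5 {n : ℕ} (hn : 0 < n) (ρ χ : ℝ) (hρ : 0 < ρ) (hχ : 0 < χ) :
    let S : Set ((Fin n → ℝ) × Matrix (Fin n) (Fin n) ℝ) :=
      {p | p.2.IsSymm ∧ p.2.trace = 0 ∧
           lambdaMax (ρ⁻¹ • vecMulVec p.1 p.1 - p.2) ≤ χ / n}
    Convex ℝ S ∧ IsCompact S := by
  intro S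
  have hn' : (0:ℝ) < n := by exact_mod_cast hn
  have hχn : χ / n ≤ χ := by
    rw [div_le_iff₀ hn']
    nlinarith [show (1:ℝ) ≤ n by exact_mod_cast hn]
  have hχn0 : 0 < χ / n := div_pos hχ hn'
  -- membership criterion
  have hmem : ∀ p : (Fin n → ℝ) × Matrix (Fin n) (Fin n) ℝ,
      p ∈ S ↔ p.2.IsSymm ∧ p.2.trace = 0 ∧
        ∀ v : Fin n → ℝ, (∑ i, v i ^ 2) = 1 →
          ρ⁻¹ * (∑ i, v i * p.1 i) ^ 2 - ∑ i, ∑ j, v i * p.2 i j * v j ≤ χ / n := by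
    intro p
    have : lambdaMax (ρ⁻¹ • vecMulVec p.1 p.1 - p.2) ≤ χ / n ↔
        ∀ v : Fin n → ℝ, (∑ i, v i ^ 2) = 1 →
          ρ⁻¹ * (∑ i, v i * p.1 i) ^ 2 - ∑ i, ∑ j, v i * p.2 i j * v j ≤ χ / n := by
      rw [lambdaMax_le_iff hn]
      simp_rw [rayleigh_formula]
    exact and_congr_right fun _ => and_congr_right fun _ => this
  constructor
  · -- Convexity
    rintro p hp q hq a b ha hb hab
    rw [hmem] at hp hq ⊢
    obtain ⟨hs1, ht1, h1⟩ := hp; obtain ⟨hs2, ht2, h2⟩ := hq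
    refine ⟨?_, ?_, ?_⟩
    · show (a • p.2 + b • q.2)ᵀ = a • p.2 + b • q.2
      rw [transpose_add, transpose_smul, transpose_smul, hs1.eq, hs2.eq]
    · show (a • p.2 + b • q.2).trace = 0
      rw [trace_add, trace_smul, trace_smul, ht1, ht2]
      simp
    · intro v hv
      have e1 : ∀ i, (a • p + b • q).1 i = a * p.1 i + b * q.1 i := fun i => rfl
      have e2 : ∀ i j, (a • p + b • q).2 i j = a * p.2 i j + b * q.2 i j := fun i j => rfl
      simp_rw [e1, e2]
      have hsum1 : ∑ i, v i * (a * p.1 i + b * q.1 i)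
          = a * ∑ i, v i * p.1 i + b * ∑ i, v i * q.1 i := by
        simp_rw [show ∀ i, v i * (a * p.1 i + b * q.1 i)
          = a * (v i * p.1 i) + b * (v i * q.1 i) from fun i => by ring,
          Finset.sum_add_distrib, ← Finset.mul_sum]
      have hsum2 : ∑ i, ∑ j, v i * (a * p.2 i j + b * q.2 i j) * v j
          = a * ∑ i, ∑ j, v i * p.2 i j * v j + b * ∑ i, ∑ j, v i * q.2 i j * v j := by
        simp_rw [show ∀ i j, v i * (a * p.2 i j + b * q.2 i j) * v j
          = a * (v i * p.2 i j * v j) + b * (v i * q.2 i j * v j) from fun i j => by ring,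
          Finset.sum_add_distrib, ← Finset.mul_sum]
      rw [hsum1, hsum2]
      set X := ∑ i, v i * p.1 i
      set Y := ∑ i, v i * q.1 i
      have k1 := h1 v hv
      have k2 := h2 v hv
      have key : ρ⁻¹ * (a * X + b * Y) ^ 2 ≤ a * (ρ⁻¹ * X ^ 2) + b * (ρ⁻¹ * Y ^ 2) := by
        have hb' : b = 1 - a := by linarith
        have hid : a * (ρ⁻¹ * X ^ 2) + b * (ρ⁻¹ * Y ^ 2) - ρ⁻¹ * (a * X + b * Y) ^ 2
            = ρ⁻¹ * (a * b * (X - Y) ^ 2) := by rw [hb']; ring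
        have hnn : 0 ≤ ρ⁻¹ * (a * b * (X - Y) ^ 2) :=
          mul_nonneg (inv_nonneg.mpr hρ.le)
            (mul_nonneg (mul_nonneg ha hb) (sq_nonneg (X - Y)))
        linarith
      have hsc : a * (χ / n) + b * (χ / n) = χ / n := by rw [← add_mul, hab, one_mul]
      have c1 := mul_le_mul_of_nonneg_left k1 ha
      have c2 := mul_le_mul_of_nonneg_left k2 hb
      nlinarith [key, c1, c2, hsc]
  · -- Compactness
    have hclosed : IsClosed S := by
      have hMc : Continuous (fun p : (Fin n → ℝ) × Matrix (Fin n) (Fin n) ℝ =>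
          ρ⁻¹ • vecMulVec p.1 p.1 - p.2) :=
        ((Continuous.matrix_vecMulVec continuous_fst continuous_fst).const_smul ρ⁻¹).sub
          continuous_snd
      have h1 : IsClosed {p : (Fin n → ℝ) × Matrix (Fin n) (Fin n) ℝ | p.2ᵀ = p.2} :=
        isClosed_eq continuous_snd.matrix_transpose continuous_snd
      have h2 : IsClosed {p : (Fin n → ℝ) × Matrix (Fin n) (Fin n) ℝ | p.2.trace = 0} :=
        isClosed_eq continuous_snd.matrix_trace continuous_const
      have h3 : IsClosed {p : (Fin n → ℝ) × Matrix (Fin n) (Fin n) ℝ |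
          lambdaMax (ρ⁻¹ • vecMulVec p.1 p.1 - p.2) ≤ χ / n} := by
        have heq : {p : (Fin n → ℝ) × Matrix (Fin n) (Fin n) ℝ |
            lambdaMax (ρ⁻¹ • vecMulVec p.1 p.1 - p.2) ≤ χ / n}
            = ⋂ (v : Fin n → ℝ) (_ : (∑ i, v i ^ 2) = 1),
              {p | v ⬝ᵥ (ρ⁻¹ • vecMulVec p.1 p.1 - p.2).mulVec v ≤ χ / n} := by
          ext p
          simp only [Set.mem_setOf_eq, Set.mem_iInter, lambdaMax_le_iff hn]
        rw [heq]
        refine isClosed_iInter fun v => isClosed_iInter fun hv =>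
          isClosed_le ?_ continuous_const
        exact Continuous.dotProduct continuous_const
          (hMc.matrix_mulVec continuous_const)
      exact h1.inter (h2.inter h3)
    set a : ℝ := Real.sqrt (2 * ρ * χ) with ha_def
    set b : ℝ := 2 * χ with hb_def
    have hK : IsCompact ((Set.univ.pi fun _ : Fin n => Set.Icc (-a) a) ×ˢ
        {M : Matrix (Fin n) (Fin n) ℝ | ∀ i j, M i j ∈ Set.Icc (-b) b}) := by
      refine IsCompact.prod (isCompact_univ_pi fun _ => isCompact_Icc) ?_
      have : {M : Matrix (Fin n) (Fin n) ℝ | ∀ i j, M i j ∈ Set.Icc (-b) b}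
          = Set.univ.pi (fun _ : Fin n => Set.univ.pi fun _ : Fin n => Set.Icc (-b) b) := by
        ext M
        exact ⟨fun h i _ j _ => h i j, fun h i j => h i (Set.mem_univ i) j (Set.mem_univ j)⟩
      rw [this]
      exact isCompact_univ_pi fun _ => isCompact_univ_pi fun _ => isCompact_Icc
    refine hK.of_isClosed_subset hclosed ?_
    rintro ⟨m, U⟩ hp
    rw [hmem] at hp
    obtain ⟨hsym, htr, h⟩ := hp
    simp only at h
    -- diagonal bound (lower)
    have hd : ∀ i, ρ⁻¹ * m i ^ 2 - U i i ≤ χ / n := by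
      intro i
      have hu : ∑ k, vv i i (1:ℝ) 0 k ^ 2 = 1 := by
        rw [vv_normsq, vv_apply_diag]
        ring
      have := h (vv i i 1 0) hu
      rw [vv_sum, vv_quad] at this
      linarith [this]
    have hdiag_lb : ∀ i, -(χ / n) ≤ U i i := by
      intro i
      have h0 : 0 ≤ ρ⁻¹ * m i ^ 2 := mul_nonneg (inv_nonneg.mpr hρ.le) (sq_nonneg _)
      linarith [hd i]
    have hdiag_ub : ∀ i, U i i ≤ χ := by
      intro i
      have hsum : ∑ k, U k k = 0 := by simpa [Matrix.trace, Matrix.diag] using htr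
      have hadd := Finset.add_sum_erase univ (fun k => U k k) (mem_univ i)
      have h4 : ∀ k ∈ univ.erase i, -(χ / n) ≤ U k k := fun k _ => hdiag_lb k
      have h5 : ∑ _k ∈ univ.erase i, (-(χ / n)) ≤ ∑ k ∈ univ.erase i, U k k :=
        Finset.sum_le_sum h4
      rw [Finset.sum_const] at h5
      have hcard : ((univ.erase i).card : ℝ) ≤ n := by
        have := Finset.card_erase_of_mem (mem_univ i)
        rw [this]
        simp only [Finset.card_univ, Fintype.card_fin]
        exact_mod_cast Nat.sub_le n 1
      rw [nsmul_eq_mul] at h5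
      have hkey : (((univ.erase i).card : ℝ)) * (-(χ / n)) ≥ (n:ℝ) * (-(χ / n)) := by
        apply mul_le_mul_of_nonpos_right hcard
        · linarith [hχn0]
      have hnc : (n:ℝ) * (χ / n) = χ := mul_div_cancel₀ χ hn'.ne'
      nlinarith [h5, hadd, hkey, hnc]
    -- m bound
    have hm2 : ∀ i, m i ^ 2 ≤ 2 * ρ * χ := by
      intro i
      have h7 := mul_le_mul_of_nonneg_left (hd i) hρ.le
      have h8 : ρ * (ρ⁻¹ * m i ^ 2) = m i ^ 2 := by
        field_simp
      rw [mul_sub, h8] at h7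
      have h9 : ρ * (χ / n) ≤ ρ * χ := mul_le_mul_of_nonneg_left hχn hρ.le
      have h10 : ρ * U i i ≤ ρ * χ := mul_le_mul_of_nonneg_left (hdiag_ub i) hρ.le
      linarith
    have hma : ∀ i, |m i| ≤ a := by
      intro i
      rw [ha_def, ← Real.sqrt_sq_eq_abs]
      exact Real.sqrt_le_sqrt (hm2 i)
    -- U bounds
    have hUb : ∀ i j, |U i j| ≤ b := by
      intro i j
      rcases eq_or_ne i j with rfl | hij
      · rw [abs_le]
        constructor
        · linarith [hdiag_lb i, hχn]
        · linarith [hdiag_ub i, hχ]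
      · have hUsym : U j i = U i j := by
          have := congrFun (congrFun hsym.eq i) j
          simpa [transpose_apply] using this
        set s : ℝ := Real.sqrt 2⁻¹ with hs_def
        have hs2 : s ^ 2 = 2⁻¹ := Real.sq_sqrt (by norm_num)
        have hss : s * s = 2⁻¹ := by rw [← sq]; exact hs2
        -- plus vector
        have hup : ∑ k, vv i j s s k ^ 2 = 1 := by
          rw [vv_normsq, vv_apply_left hij, vv_apply_right hij]
          rw [hss]; norm_num
        have hum : ∑ k, vv i j s (-s) k ^ 2 = 1 := by
          rw [vv_normsq, vv_apply_left hij, vv_apply_right hij]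
          rw [neg_mul_neg, hss]
          norm_num
        have hp1 := h (vv i j s s) hup
        have hp2 := h (vv i j s (-s)) hum
        rw [vv_sum, vv_quad] at hp1 hp2
        have e1 : s * (s * U i i + s * U j i) + s * (s * U i j + s * U j j)
            = (s * s) * (U i i + U j j + 2 * U i j) := by rw [hUsym]; ring
        have e2 : s * (s * U i i + -s * U j i) + -s * (s * U i j + -s * U j j)
            = (s * s) * (U i i + U j j - 2 * U i j) := by rw [hUsym]; ring
        rw [e1, hss] at hp1
        rw [e2, hss] at hp2
        have hq1 : 0 ≤ ρ⁻¹ * (s * m i + s * m j) ^ 2 :=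
          mul_nonneg (inv_nonneg.mpr hρ.le) (sq_nonneg _)
        have hq2 : 0 ≤ ρ⁻¹ * (s * m i + -s * m j) ^ 2 :=
          mul_nonneg (inv_nonneg.mpr hρ.le) (sq_nonneg _)
        rw [abs_le]
        constructor
        · linarith [hp1, hq1, hdiag_ub i, hdiag_ub j, hχn]
        · linarith [hp2, hq2, hdiag_ub i, hdiag_ub j, hχn]
    constructor
    · exact Set.mem_univ_pi.mpr fun i => Set.mem_Icc.mpr (abs_le.mp (hma i))
    · exact fun i j => Set.mem_Icc.mpr (abs_le.mp (hUb i j))
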